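/- Let γ, γ̃ ∈ ℝ with γ ≤ γ̃. Suppose the γ-shifted system has a dichotomy on a splitting (L1,L2) and the γ̃-shifted system has a dichotomy on a splitting (L̃1,L̃2). Then L1 ⊆ L̃1. -/

import Mathlib

open Set Filter Topology

noncomputable section

abbrev Euc (d : ℕ) := EuclideanSpace ℝ (Fin d)

/-- The solution `x(n, x₀)` of `x(n+1) = A(n) x(n)`, `x(0,x₀) = x₀`. -/
def sol {d : ℕ} (A : ℕ → (Euc d ≃L[ℝ] Euc d)) : ℕ → Euc d → Euc d
  | 0, x => x
  | n + 1, x => A n (sol A n x)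

/-- Boundedness of the coefficients `A(n)` and their inverses. -/
def BddSys {d : ℕ} (A : ℕ → (Euc d ≃L[ℝ] Euc d)) : Prop :=
  (∃ c : ℝ, ∀ n : ℕ, ‖(A n : Euc d →L[ℝ] Euc d)‖ ≤ c) ∧
  (∃ c : ℝ, ∀ n : ℕ, ‖((A n).symm : Euc d →L[ℝ] Euc d)‖ ≤ c)

/-- `D1(γ,U)` holds uniformly (constant `C`). -/
def D1u {d : ℕ} (A : ℕ → (Euc d ≃L[ℝ] Euc d)) (γ : ℝ) (U : Submodule ℝ (Euc d)) : Prop :=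
  ∃ C : ℝ, 0 < C ∧
    ∀ m n : ℕ, m ≤ n → ∀ x₀ ∈ U,
      ‖sol A n x₀‖ ≤ C * Real.exp (γ * ((n : ℝ) - (m : ℝ))) * ‖sol A m x₀‖

/-- `D2(γ,U)` holds uniformly (constant `C`). -/
def D2u {d : ℕ} (A : ℕ → (Euc d ≃L[ℝ] Euc d)) (γ : ℝ) (U : Submodule ℝ (Euc d)) : Prop :=
  ∃ C : ℝ, 0 < C ∧
    ∀ m n : ℕ, m ≤ n → ∀ x₀ ∈ U,
      C * Real.exp (γ * ((n : ℝ) - (m : ℝ))) * ‖sol A m x₀‖ ≤ ‖sol A n x₀‖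

/-- `𝒰` is a set of subspaces of `L` whose union is `L`. -/
def IsCover {d : ℕ} (𝒰 : Set (Submodule ℝ (Euc d))) (L : Submodule ℝ (Euc d)) : Prop :=
  (∀ U ∈ 𝒰, U ≤ L) ∧ (⋃ U ∈ 𝒰, (U : Set (Euc d))) = (L : Set (Euc d))

/-- The `γ`-shifted system `x(n+1) = e^{-γ} A(n) x(n)` has a dichotomy on the
splitting `(L1,L2)`. -/
def ShiftedDichotomy {d : ℕ} (A : ℕ → (Euc d ≃L[ℝ] Euc d)) (γ : ℝ)
    (L1 L2 : Submodule ℝ (Euc d)) : Prop :=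
  IsCompl L1 L2 ∧
  ∃ 𝒰1 𝒰2 : Set (Submodule ℝ (Euc d)), IsCover 𝒰1 L1 ∧ IsCover 𝒰2 L2 ∧
    ∃ α : ℝ, 0 < α ∧ (∀ U ∈ 𝒰1, D1u A (γ - α) U) ∧ (∀ U ∈ 𝒰2, D2u A (γ + α) U)

lemma sol_add {d : ℕ} (A : ℕ → (Euc d ≃L[ℝ] Euc d)) (n : ℕ) (x y : Euc d) :
    sol A n (x + y) = sol A n x + sol A n y := by
  induction n with
  | zero => rfl
  | succ n ih => simp [sol, ih, map_add]

lemma exp_nat_tendsto_zero {β : ℝ} (hβ : β < 0) :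
    Tendsto (fun n : ℕ => Real.exp (β * n)) atTop (𝓝 0) := by
  rw [Real.tendsto_exp_comp_nhds_zero]
  exact (tendsto_const_mul_atBot_of_neg hβ).mpr tendsto_natCast_atTop_atTop

/-- **Monotonicity of dichotomy subspaces.** -/
theorem dichotomy_subspace_monotone {d : ℕ} (hd : 1 ≤ d)
    (A : ℕ → (Euc d ≃L[ℝ] Euc d)) (hA : BddSys A)
    (γ γ' : ℝ) (hγ : γ ≤ γ')
    (L1 L2 L1' L2' : Submodule ℝ (Euc d))
    (h : ShiftedDichotomy A γ L1 L2) (h' : ShiftedDichotomy A γ' L1' L2') :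
    L1 ≤ L1' := by
  obtain ⟨hc, 𝒰1, 𝒰2, hcov1, hcov2, α, hα, hD1, hD2⟩ := h
  obtain ⟨hc', 𝒰1', 𝒰2', hcov1', hcov2', α', hα', hD1', hD2'⟩ := h'
  intro x hx
  have hxtop : x ∈ L1' ⊔ L2' := by rw [hc'.sup_eq_top]; trivial
  obtain ⟨y, hy, z, hz, hyz⟩ := Submodule.mem_sup.mp hxtop
  suffices hz0 : z = 0 by
    subst hz0; rw [add_zero] at hyz; exact hyz ▸ hy
  by_contra hz0
  -- covers
  have hxU : x ∈ ⋃ U ∈ 𝒰1, (U : Set (Euc d)) := by rw [hcov1.2]; exact hx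
  obtain ⟨U, hU, hxU⟩ := Set.mem_iUnion₂.mp hxU
  have hyV : y ∈ ⋃ U ∈ 𝒰1', (U : Set (Euc d)) := by rw [hcov1'.2]; exact hy
  obtain ⟨V, hV, hyV⟩ := Set.mem_iUnion₂.mp hyV
  have hzW : z ∈ ⋃ U ∈ 𝒰2', (U : Set (Euc d)) := by rw [hcov2'.2]; exact hz
  obtain ⟨W, hW, hzW⟩ := Set.mem_iUnion₂.mp hzW
  obtain ⟨Cx, hCx, hbx⟩ := hD1 U hU
  obtain ⟨Cy, hCy, hby⟩ := hD1' V hV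
  obtain ⟨Cz, hCz, hbz⟩ := hD2' W hW
  have key : ∀ n : ℕ, Cz * ‖z‖ ≤
      Cx * ‖x‖ * Real.exp (((γ - α) - (γ' + α')) * n) +
      Cy * ‖y‖ * Real.exp (((γ' - α') - (γ' + α')) * n) := by
    intro n
    have h1 := hbx 0 n (Nat.zero_le n) x hxU
    have h2 := hby 0 n (Nat.zero_le n) y hyV
    have h3 := hbz 0 n (Nat.zero_le n) z hzW
    simp only [Nat.cast_zero, sub_zero] at h1 h2 h3
    have hsolz : sol A n z = sol A n x - sol A n y := by
      have := sol_add A n y z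
      rw [hyz] at this
      exact eq_sub_of_add_eq' this.symm
    have hnorm : ‖sol A n z‖ ≤ ‖sol A n x‖ + ‖sol A n y‖ := by
      rw [hsolz]; exact norm_sub_le _ _
    have hsol0x : sol A 0 x = x := rfl
    have hsol0y : sol A 0 y = y := rfl
    have hsol0z : sol A 0 z = z := rfl
    rw [hsol0x] at h1; rw [hsol0y] at h2; rw [hsol0z] at h3
    have E : (0:ℝ) < Real.exp ((γ' + α') * n) := Real.exp_pos _
    have hexp1 : Real.exp (((γ - α) - (γ' + α')) * n)
        = Real.exp ((γ - α) * n) / Real.exp ((γ' + α') * n) := by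
      rw [← Real.exp_sub]; congr 1; ring
    have hexp2 : Real.exp (((γ' - α') - (γ' + α')) * n)
        = Real.exp ((γ' - α') * n) / Real.exp ((γ' + α') * n) := by
      rw [← Real.exp_sub]; congr 1; ring
    rw [hexp1, hexp2, mul_div_assoc', mul_div_assoc', ← add_div, le_div_iff₀ E]
    nlinarith [h1, h2, h3, hnorm, norm_nonneg (sol A n x), norm_nonneg (sol A n y),
      mul_le_mul_of_nonneg_left hnorm hCz.le]
  have hβ1 : (γ - α) - (γ' + α') < 0 := by linarith
  have hβ2 : (γ' - α') - (γ' + α') < 0 := by linarith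
  have hlim : Tendsto (fun n : ℕ =>
      Cx * ‖x‖ * Real.exp (((γ - α) - (γ' + α')) * n) +
      Cy * ‖y‖ * Real.exp (((γ' - α') - (γ' + α')) * n)) atTop (𝓝 0) := by
    have := ((exp_nat_tendsto_zero hβ1).const_mul (Cx * ‖x‖)).add
      ((exp_nat_tendsto_zero hβ2).const_mul (Cy * ‖y‖))
    simpa using this
  have hle : Cz * ‖z‖ ≤ 0 := ge_of_tendsto' hlim key
  have : 0 < Cz * ‖z‖ := mul_pos hCz (norm_pos_iff.mpr hz0)
  linarith


end
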